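/- Let a₁(t), …, a_{2N}(t) be positive functions of t, each converging to a nonnegative limit as t → ∞ with a₁(∞) + a₃(∞) + ⋯ + a_{2N-1}(∞) = a_i > 0 and a₂(∞) + ⋯ + a_{2N}(∞) = a_p > 0, and let w(t) → ∞. Define the continued fractions x_{2N}(t) = [a₁(t), a₂(t)e^{-w(t)}, a₃(t), …, a_{2N}(t)e^{-w(t)}] and x_{2N-1}(t) = [a₁(t), a₂(t)e^{-w(t)}, …, a_{2N-1}(t)]. Then x_{2N-1}(t) ~ a_i and x_{2N}(t) ~ (1/a_p)·e^{w(t)} as t → ∞. -/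

import Mathlib

open Real Filter

noncomputable def contFrac : List ℝ → ℝ
  | [] => 0
  | b :: l => b + 1 / contFrac l

lemma contFrac_nonneg (l : List ℝ) (h : ∀ x ∈ l, 0 < x) : 0 ≤ contFrac l := by
  induction l with
  | nil => simp [contFrac]
  | cons b l ih =>
    have hb : 0 < b := h b (by simp)
    have := ih (fun x hx => h x (by simp [hx]))
    simp only [contFrac]
    positivity

lemma contFrac_pos (l : List ℝ) (h : ∀ x ∈ l, 0 < x) (hne : l ≠ []) : 0 < contFrac l := by
  cases l with
  | nil => exact absurd rfl hne
  | cons b l =>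
    have hb : 0 < b := h b (by simp)
    have := contFrac_nonneg l (fun x hx => h x (by simp [hx]))
    simp only [contFrac]
    positivity

noncomputable def cfF (w : ℝ → ℝ) (a : ℕ → ℝ → ℝ) (n : ℕ) (t : ℝ) : ℝ :=
  contFrac (List.ofFn (fun i : Fin n =>
    if i.val % 2 = 0 then a i.val t else a i.val t * Real.exp (-w t)))

lemma cfF_pos (w : ℝ → ℝ) (a : ℕ → ℝ → ℝ) (n : ℕ) (hn : 0 < n) (t : ℝ)
    (hpos : ∀ j, 0 < a j t) : 0 < cfF w a n t := by
  apply contFrac_pos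
  · intro x hx
    rw [List.mem_ofFn] at hx
    obtain ⟨i, hi⟩ := hx
    have := hpos i.val
    have he := Real.exp_pos (-w t)
    by_cases h : i.val % 2 = 0 <;> simp [h] at hi <;> rw [← hi] <;> positivity
  · simp [List.ofFn_eq_nil_iff]; omega

lemma cfF_step (w : ℝ → ℝ) (a : ℕ → ℝ → ℝ) (n : ℕ) (t : ℝ) :
    cfF w a (n + 2) t
      = a 0 t + 1 / (a 1 t * Real.exp (-w t) + 1 / cfF w (fun j => a (j + 2)) n t) := by
  simp only [cfF, List.ofFn_succ, contFrac]
  norm_num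
  congr 2
  funext i
  have : (i.val + 1 + 1) % 2 = i.val % 2 := by omega
  simp [Fin.val_succ, this]

lemma sum_shift (f : ℕ → ℝ) (n : ℕ) :
    ∑ j ∈ Finset.range (n + 2), f j = f 0 + f 1 + ∑ j ∈ Finset.range n, f (j + 2) := by
  rw [Finset.sum_range_succ', Finset.sum_range_succ']
  simp only [show ∀ x, x + 1 + 1 = x + 2 from fun x => rfl]
  ring

section Limits

lemma eps_lim {w : ℝ → ℝ} (hw : Tendsto w atTop atTop) : Tendsto (fun t => Real.exp (-w t)) atTop (nhds 0) :=
  Real.tendsto_exp_atBot.comp (tendsto_neg_atBot_iff.mpr hw)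

lemma odd_lim {w : ℝ → ℝ} (hw : Tendsto w atTop atTop) (k : ℕ) : ∀ (a : ℕ → ℝ → ℝ) (L : ℕ → ℝ),
    (∀ j t, 0 < a j t) → (∀ j, Tendsto (a j) atTop (nhds (L j))) → (∀ j, 0 ≤ L j) →
    Tendsto (cfF w a (2 * k + 1)) atTop
      (nhds (∑ j ∈ Finset.range (2 * k + 1), if j % 2 = 0 then L j else 0)) := by
  induction k with
  | zero =>
    intro a L hpos hlim hnn
    have : cfF w a 1 = fun t => a 0 t := by
      funext t
      simp [cfF, List.ofFn_succ, contFrac]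
    rw [this]
    simpa using hlim 0
  | succ k ih =>
    intro a L hpos hlim hnn
    have hn : 2 * (k + 1) + 1 = 2 * k + 1 + 2 := by ring
    rw [hn]
    set F' : ℝ → ℝ := cfF w (fun j => a (j + 2)) (2 * k + 1) with hF'
    have hF'pos : ∀ t, 0 < F' t :=
      fun t => cfF_pos w _ _ (by omega) t (fun j => hpos (j + 2) t)
    have ihF' := ih (fun j => a (j + 2)) (fun j => L (j + 2))
      (fun j t => hpos (j + 2) t) (fun j => hlim (j + 2)) (fun j => hnn (j + 2))
    set s' : ℝ := ∑ j ∈ Finset.range (2 * k + 1), if j % 2 = 0 then L (j + 2) else 0 with hs'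
    have hsum : (∑ j ∈ Finset.range (2 * k + 1 + 2), if j % 2 = 0 then L j else 0)
        = L 0 + s' := by
      rw [sum_shift (fun j => if j % 2 = 0 then L j else 0) (2 * k + 1)]
      norm_num
      rfl
    rw [hsum]
    have heq : cfF w a (2 * k + 1 + 2)
        = fun t => a 0 t + 1 / (a 1 t * Real.exp (-w t) + 1 / F' t) := by
      funext t; exact cfF_step w a _ t
    rw [heq]
    have hs'nn : 0 ≤ s' := by
      apply Finset.sum_nonneg; intro j _; split <;> [exact hnn _; rfl]
    have hmul : Tendsto (fun t => a 1 t * Real.exp (-w t)) atTop (nhds 0) := by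
      simpa using (hlim 1).mul (eps_lim hw)
    rcases eq_or_lt_of_le hs'nn with hz | hp
    · -- s' = 0 : 1/F' → atTop
      have hF'0 : Tendsto F' atTop (nhdsWithin 0 (Set.Ioi 0)) := by
        rw [tendsto_nhdsWithin_iff]
        exact ⟨hz ▸ ihF', Eventually.of_forall (fun t => hF'pos t)⟩
      have hinv : Tendsto (fun t => 1 / F' t) atTop atTop := by
        simpa [one_div, Function.comp_def] using tendsto_inv_nhdsGT_zero.comp hF'0
      have hD : Tendsto (fun t => a 1 t * Real.exp (-w t) + 1 / F' t) atTop atTop :=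
        hmul.add_atTop hinv
      have : Tendsto (fun t => 1 / (a 1 t * Real.exp (-w t) + 1 / F' t)) atTop (nhds 0) := by
        simpa [one_div, Function.comp_def] using tendsto_inv_atTop_zero.comp hD
      simpa [← hz] using (hlim 0).add this
    · -- s' > 0
      have hinv : Tendsto (fun t => 1 / F' t) atTop (nhds (1 / s')) := by
        simpa [one_div] using ihF'.inv₀ (ne_of_gt hp)
      have hD : Tendsto (fun t => a 1 t * Real.exp (-w t) + 1 / F' t) atTop (nhds (1 / s')) := by
        simpa using hmul.add hinv
      have : Tendsto (fun t => 1 / (a 1 t * Real.exp (-w t) + 1 / F' t))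
          atTop (nhds s') := by
        have := hD.inv₀ (by positivity)
        simpa [one_div, inv_inv] using this
      exact (hlim 0).add this

lemma even_lim {w : ℝ → ℝ} (hw : Tendsto w atTop atTop) (k : ℕ) : ∀ (a : ℕ → ℝ → ℝ) (L : ℕ → ℝ),
    (∀ j t, 0 < a j t) → (∀ j, Tendsto (a j) atTop (nhds (L j))) → (∀ j, 0 ≤ L j) →
    (let r := ∑ j ∈ Finset.range (2 * k + 2), if j % 2 = 1 then L j else 0
     (0 < r → Tendsto (fun t => cfF w a (2 * k + 2) t * Real.exp (-w t)) atTop (nhds (1 / r))) ∧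
     (r = 0 → Tendsto (fun t => cfF w a (2 * k + 2) t * Real.exp (-w t)) atTop atTop)) := by
  induction k with
  | zero =>
    intro a L hpos hlim hnn
    have heq : (fun t => cfF w a 2 t * Real.exp (-w t))
        = fun t => a 0 t * Real.exp (-w t) + 1 / a 1 t := by
      funext t
      have h1 : (0:ℝ) < a 1 t := hpos 1 t
      have he : (0:ℝ) < Real.exp (-w t) := Real.exp_pos _
      simp only [cfF, List.ofFn_succ, contFrac]
      norm_num
      simp only [show contFrac [] = 0 from rfl]
      field_simp
      ring
    have hr : (∑ j ∈ Finset.range 2, if j % 2 = 1 then L j else 0) = L 1 := by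
      simp [Finset.sum_range_succ]
    simp only [hr, heq]
    have hmul : Tendsto (fun t => a 0 t * Real.exp (-w t)) atTop (nhds 0) := by
      simpa using (hlim 0).mul (eps_lim hw)
    constructor
    · intro hrpos
      have : Tendsto (fun t => 1 / a 1 t) atTop (nhds (1 / L 1)) := by
        simpa [one_div] using (hlim 1).inv₀ (ne_of_gt hrpos)
      simpa using hmul.add this
    · intro hrz
      have h10 : Tendsto (a 1) atTop (nhdsWithin 0 (Set.Ioi 0)) := by
        rw [tendsto_nhdsWithin_iff]
        exact ⟨hrz ▸ hlim 1, Eventually.of_forall (fun t => hpos 1 t)⟩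
      have hinv : Tendsto (fun t => 1 / a 1 t) atTop atTop := by
        simpa [one_div, Function.comp_def] using tendsto_inv_nhdsGT_zero.comp h10
      exact hmul.add_atTop hinv
  | succ k ih =>
    intro a L hpos hlim hnn
    have hn : 2 * (k + 1) + 2 = 2 * k + 2 + 2 := by ring
    rw [hn]
    set F' : ℝ → ℝ := cfF w (fun j => a (j + 2)) (2 * k + 2) with hF'd
    have hF'pos : ∀ t, 0 < F' t :=
      fun t => cfF_pos w _ _ (by omega) t (fun j => hpos (j + 2) t)
    set G' : ℝ → ℝ := fun t => F' t * Real.exp (-w t) with hG'd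
    have hG'pos : ∀ t, 0 < G' t := fun t => by
      have := hF'pos t; have := Real.exp_pos (-w t); positivity
    have ihr := ih (fun j => a (j + 2)) (fun j => L (j + 2))
      (fun j t => hpos (j + 2) t) (fun j => hlim (j + 2)) (fun j => hnn (j + 2))
    simp only at ihr
    set r' : ℝ := ∑ j ∈ Finset.range (2 * k + 2), if j % 2 = 1 then L (j + 2) else 0 with hr'd
    have hr'nn : 0 ≤ r' := by
      apply Finset.sum_nonneg; intro j _; split <;> [exact hnn _; rfl]
    have hsum : (∑ j ∈ Finset.range (2 * k + 2 + 2), if j % 2 = 1 then L j else 0)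
        = L 1 + r' := by
      rw [sum_shift (fun j => if j % 2 = 1 then L j else 0) (2 * k + 2)]
      norm_num
      rfl
    rw [hsum]
    -- key pointwise identity
    have heq : (fun t => cfF w a (2 * k + 2 + 2) t * Real.exp (-w t))
        = fun t => a 0 t * Real.exp (-w t) + 1 / (a 1 t + 1 / G' t) := by
      funext t
      rw [cfF_step w a _ t, ← hF'd]
      have h1 : (0:ℝ) < a 1 t := hpos 1 t
      have he : (0:ℝ) < Real.exp (-w t) := Real.exp_pos _
      have hF : (0:ℝ) < F' t := hF'pos t
      have hG : (0:ℝ) < G' t := hG'pos t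
      have hD : (0:ℝ) < a 1 t * Real.exp (-w t) + 1 / F' t := by positivity
      have hD2 : (0:ℝ) < a 1 t + 1 / G' t := by positivity
      rw [hG'd]
      field_simp
    rw [heq]
    have hmul : Tendsto (fun t => a 0 t * Real.exp (-w t)) atTop (nhds 0) := by
      simpa using (hlim 0).mul (eps_lim hw)
    rcases eq_or_lt_of_le hr'nn with hz | hp
    · -- r' = 0, G' → atTop, 1/G' → 0, a1 + 1/G' → L 1
      have hG'top : Tendsto G' atTop atTop := ihr.2 hz.symm
      have hinv0 : Tendsto (fun t => 1 / G' t) atTop (nhds 0) := by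
        simpa [one_div, Function.comp_def] using tendsto_inv_atTop_zero.comp hG'top
      have hD : Tendsto (fun t => a 1 t + 1 / G' t) atTop (nhds (L 1)) := by
        simpa using (hlim 1).add hinv0
      constructor
      · intro hrpos
        have hL1 : 0 < L 1 := by rw [← hz] at hrpos; simpa using hrpos
        have : Tendsto (fun t => 1 / (a 1 t + 1 / G' t)) atTop (nhds (1 / L 1)) := by
          simpa [one_div] using hD.inv₀ (ne_of_gt hL1)
        have := hmul.add this
        simpa [← hz] using this
      · intro hrz
        have hL1 : L 1 = 0 := by
          have := hnn 1; nlinarith [hrz, hz]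
        have hDpos : ∀ t, 0 < a 1 t + 1 / G' t := fun t => by
          have := hpos 1 t; have := hG'pos t; positivity
        have hD0 : Tendsto (fun t => a 1 t + 1 / G' t) atTop (nhdsWithin 0 (Set.Ioi 0)) := by
          rw [tendsto_nhdsWithin_iff]
          exact ⟨hL1 ▸ hD, Eventually.of_forall hDpos⟩
        have hinv : Tendsto (fun t => 1 / (a 1 t + 1 / G' t)) atTop atTop := by
          simpa [one_div, Function.comp_def] using tendsto_inv_nhdsGT_zero.comp hD0
        exact hmul.add_atTop hinv
    · -- r' > 0 : G' → 1/r'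
      have hG'lim : Tendsto G' atTop (nhds (1 / r')) := ihr.1 hp
      have hinv : Tendsto (fun t => 1 / G' t) atTop (nhds r') := by
        have := hG'lim.inv₀ (by positivity)
        simpa [one_div, inv_inv] using this
      have hD : Tendsto (fun t => a 1 t + 1 / G' t) atTop (nhds (L 1 + r')) :=
        (hlim 1).add hinv
      have hrpos : 0 < L 1 + r' := by have := hnn 1; linarith
      constructor
      · intro _
        have : Tendsto (fun t => 1 / (a 1 t + 1 / G' t)) atTop (nhds (1 / (L 1 + r'))) := by
          simpa [one_div] using hD.inv₀ (ne_of_gt hrpos)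
        simpa using hmul.add this
      · intro hrz
        exact absurd hrz (ne_of_gt hrpos)

end Limits

/-- If the band thicknesses `a₁(t), …, a_{2N}(t)` converge to nonnegative limits whose
odd-indexed sum is `a_i > 0` and even-indexed sum is `a_p > 0`, and `w(t) → ∞`, then the
continued fractions `x_{2N-1}(t) = [a₁, a₂e^{-w}, …, a_{2N-1}]` and
`x_{2N}(t) = [a₁, a₂e^{-w}, …, a_{2N}e^{-w}]` satisfy `x_{2N-1}(t) ~ a_i` and
`x_{2N}(t) ~ (1/a_p)·e^{w(t)}`. -/
theorem stmt11 (N : ℕ) (hN : 0 < N) (a : Fin (2 * N) → ℝ → ℝ) (L : Fin (2 * N) → ℝ)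
    (w : ℝ → ℝ) (aᵢ aₚ : ℝ)
    (hapos : ∀ j t, 0 < a j t)
    (hlim : ∀ j, Tendsto (a j) atTop (nhds (L j)))
    (hLnn : ∀ j, 0 ≤ L j)
    (hai : ∑ j ∈ Finset.univ.filter (fun j : Fin (2 * N) => j.val % 2 = 0), L j = aᵢ)
    (hap : ∑ j ∈ Finset.univ.filter (fun j : Fin (2 * N) => j.val % 2 = 1), L j = aₚ)
    (haipos : 0 < aᵢ) (happos : 0 < aₚ)
    (hw : Tendsto w atTop atTop) :
    Tendsto (fun t =>
        contFrac (List.ofFn (fun i : Fin (2 * N - 1) =>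
          if i.val % 2 = 0 then a ⟨i.val, by omega⟩ t
          else a ⟨i.val, by omega⟩ t * Real.exp (-w t))) / aᵢ)
      atTop (nhds 1) ∧
    Tendsto (fun t =>
        contFrac (List.ofFn (fun i : Fin (2 * N) =>
          if i.val % 2 = 0 then a i t else a i t * Real.exp (-w t))) /
        ((1 / aₚ) * Real.exp (w t)))
      atTop (nhds 1) := by
  set A : ℕ → ℝ → ℝ := fun j t => if h : j < 2 * N then a ⟨j, h⟩ t else 1 with hAd
  set LL : ℕ → ℝ := fun j => if h : j < 2 * N then L ⟨j, h⟩ else 1 with hLLd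
  have hApos : ∀ j t, 0 < A j t := by
    intro j t
    by_cases h : j < 2 * N
    · simp only [hAd, dif_pos h]; exact hapos _ _
    · simp only [hAd, dif_neg h]; exact one_pos
  have hAlim : ∀ j, Tendsto (A j) atTop (nhds (LL j)) := by
    intro j
    by_cases h : j < 2 * N
    · simp only [hAd, hLLd, dif_pos h]; exact hlim _
    · simp only [hAd, hLLd, dif_neg h]; exact tendsto_const_nhds
  have hLLnn : ∀ j, 0 ≤ LL j := by
    intro j
    by_cases h : j < 2 * N
    · simp only [hLLd, dif_pos h]; exact hLnn _
    · simp only [hLLd, dif_neg h]; exact zero_le_one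
  -- sums
  have hfin : ∀ (p : ℕ) (f : Fin (2*N) → ℝ),
      (∀ j : Fin (2*N), f j = LL j.val) →
      ∑ j ∈ Finset.univ.filter (fun j : Fin (2 * N) => j.val % 2 = p), f j
        = ∑ j ∈ Finset.range (2 * N), if j % 2 = p then LL j else 0 := by
    intro p f hf
    rw [Finset.sum_filter]
    rw [← Fin.sum_univ_eq_sum_range (fun j => if j % 2 = p then LL j else 0) (2 * N)]
    apply Finset.sum_congr rfl
    intro j _
    rw [hf j]
  have hLLa : ∀ j : Fin (2*N), L j = LL j.val := by
    intro j; simp [hLLd, j.isLt]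
  have hsum_even : (∑ j ∈ Finset.range (2 * N), if j % 2 = 0 then LL j else 0) = aᵢ := by
    rw [← hai, hfin 0 L hLLa]
  have hsum_odd : (∑ j ∈ Finset.range (2 * N), if j % 2 = 1 then LL j else 0) = aₚ := by
    rw [← hap, hfin 1 L hLLa]
  constructor
  · -- odd part
    have h21 : 2 * N - 1 = 2 * (N - 1) + 1 := by omega
    have hodd := odd_lim hw (N - 1) A LL hApos hAlim hLLnn
    have hS : (∑ j ∈ Finset.range (2 * (N - 1) + 1), if j % 2 = 0 then LL j else 0) = aᵢ := by
      rw [← hsum_even]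
      have h2 : 2 * N = (2 * (N - 1) + 1) + 1 := by omega
      rw [h2]
      conv_rhs => rw [Finset.sum_range_succ]
      have hm : (2 * (N - 1) + 1) % 2 = 1 := by omega
      simp [hm]
    rw [hS, ← h21] at hodd
    have hfeq : (fun t =>
        contFrac (List.ofFn (fun i : Fin (2 * N - 1) =>
          if i.val % 2 = 0 then a ⟨i.val, by omega⟩ t
          else a ⟨i.val, by omega⟩ t * Real.exp (-w t))) / aᵢ)
        = fun t => cfF w A (2 * N - 1) t / aᵢ := by
      funext t
      congr 1
      rw [cfF]
      refine congrArg contFrac (congrArg List.ofFn (funext fun i => ?_))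
      have hi := i.isLt
      have h' : (i : ℕ) < 2 * N := by omega
      simp only [hAd, dif_pos h']
    rw [hfeq]
    have := hodd.div_const aᵢ
    rwa [div_self (ne_of_gt haipos)] at this
  · -- even part
    have h22 : 2 * N = 2 * (N - 1) + 2 := by omega
    have heven := (even_lim hw (N - 1) A LL hApos hAlim hLLnn).1
    simp only [← h22, hsum_odd] at heven
    have heven := heven happos
    have hfeq : (fun t =>
        contFrac (List.ofFn (fun i : Fin (2 * N) =>
          if i.val % 2 = 0 then a i t else a i t * Real.exp (-w t))) /
        ((1 / aₚ) * Real.exp (w t)))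
        = fun t => (cfF w A (2 * N) t * Real.exp (-w t)) * aₚ := by
      funext t
      have hcf : contFrac (List.ofFn (fun i : Fin (2 * N) =>
          if i.val % 2 = 0 then a i t else a i t * Real.exp (-w t))) = cfF w A (2 * N) t := by
        rw [cfF]
        refine congrArg contFrac (congrArg List.ofFn (funext fun i => ?_))
        simp only [hAd, dif_pos i.isLt]
      rw [hcf, Real.exp_neg, one_div, div_eq_mul_inv, mul_inv, inv_inv]
      ring
    rw [hfeq]
    have := heven.mul_const aₚ
    rwa [one_div, inv_mul_cancel₀ (ne_of_gt happos)] at this
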